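/- Let V be a real vector space, Φ ⊆ V a set of vectors, and ht, h : V → ℝ linear functionals with ht(β) > 0 for every β ∈ Φ. For r ∈ ℝ write Φ_{=r} = {β ∈ Φ : h(β) = r·ht(β)}, and similarly Φ_{>r}, Φ_{≥r}, Φ_{<r}, Φ_{≤r} with the corresponding inequality between h(β) and r·ht(β). Then the relation α ⪯ β ⇔ h(α)·ht(β) ≤ h(β)·ht(α) is a total preorder on Φ, and it is convex in the sense of Tingley–Webster; concretely, for every r ∈ ℝ: (1) for every a in the ℝ_{≥0}-cone spanned by Φ_{=r} and every nonzero x in the additive submonoid of V generated by Φ_{>r}, the element a + x does not lie in the additive submonoid generated by Φ_{≤r}; and (2) for every a in the ℝ_{≥0}-cone spanned by Φ_{=r} and every nonzero x in the additive submonoid generated by Φ_{<r}, the element a + x does not lie in the additive submonoid generated by Φ_{≥r}. -/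

import Mathlib

/-- The `ℝ_{≥0}`-cone spanned by a subset `Φ'` of a real vector space `V`: all finite
linear combinations of elements of `Φ'` with nonnegative real coefficients. -/
def nnCone {V : Type*} [AddCommGroup V] [Module ℝ V] (Φ' : Set V) : Set V :=
  {v | ∃ (s : Finset V) (c : V → ℝ),
    (∀ x ∈ s, 0 ≤ c x) ∧ (↑s : Set V) ⊆ Φ' ∧ v = ∑ x ∈ s, c x • x}

private lemma clos_nonneg {V : Type*} [AddCommGroup V] [Module ℝ V]
    (g : V →ₗ[ℝ] ℝ) {S : Set V} (hS : ∀ v ∈ S, 0 ≤ g v) :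
    ∀ x ∈ AddSubmonoid.closure S, 0 ≤ g x := by
  intro x hx
  induction hx using AddSubmonoid.closure_induction with
  | mem v hv => exact hS v hv
  | zero => simp
  | add x y _ _ hx hy => rw [map_add]; linarith

private lemma clos_pos {V : Type*} [AddCommGroup V] [Module ℝ V]
    (g : V →ₗ[ℝ] ℝ) {S : Set V} (hS : ∀ v ∈ S, 0 < g v) :
    ∀ x ∈ AddSubmonoid.closure S, x = 0 ∨ 0 < g x := by
  intro x hx
  induction hx using AddSubmonoid.closure_induction with
  | mem v hv => exact Or.inr (hS v hv)
  | zero => exact Or.inl rfl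
  | add x y _ _ hx hy =>
    rcases hx with rfl | hx
    · simpa using hy
    rcases hy with rfl | hy
    · simp only [add_zero]; exact Or.inr hx
    · refine Or.inr ?_; rw [map_add]; linarith

private lemma cone_zero {V : Type*} [AddCommGroup V] [Module ℝ V]
    (g : V →ₗ[ℝ] ℝ) {S : Set V} (hS : ∀ v ∈ S, g v = 0) :
    ∀ a ∈ nnCone S, g a = 0 := by
  rintro a ⟨s, c, _, hsub, rfl⟩
  rw [map_sum]
  refine Finset.sum_eq_zero fun x hx => ?_
  rw [map_smul, hS x (hsub hx), smul_zero]

theorem stmt6 {V : Type*} [AddCommGroup V] [Module ℝ V] (Φ : Set V)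
    (ht h : V →ₗ[ℝ] ℝ) (hpos : ∀ β ∈ Φ, 0 < ht β) :
    -- reflexivity
    (∀ α ∈ Φ, h α * ht α ≤ h α * ht α) ∧
    -- transitivity
    (∀ α ∈ Φ, ∀ β ∈ Φ, ∀ γ ∈ Φ,
      h α * ht β ≤ h β * ht α → h β * ht γ ≤ h γ * ht β → h α * ht γ ≤ h γ * ht α) ∧
    -- totality
    (∀ α ∈ Φ, ∀ β ∈ Φ, h α * ht β ≤ h β * ht α ∨ h β * ht α ≤ h α * ht β) ∧
    -- convexity
    (∀ r : ℝ,
      (∀ a ∈ nnCone {β ∈ Φ | h β = r * ht β},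
        ∀ x ∈ AddSubmonoid.closure {β ∈ Φ | r * ht β < h β}, x ≠ 0 →
          a + x ∉ AddSubmonoid.closure {β ∈ Φ | h β ≤ r * ht β}) ∧
      (∀ a ∈ nnCone {β ∈ Φ | h β = r * ht β},
        ∀ x ∈ AddSubmonoid.closure {β ∈ Φ | h β < r * ht β}, x ≠ 0 →
          a + x ∉ AddSubmonoid.closure {β ∈ Φ | r * ht β ≤ h β})) := by
  refine ⟨fun α _ => le_refl _, ?_, fun α _ β _ => le_total _ _, ?_⟩
  · intro α hα β hβ γ hγ h1 h2
    have hb := hpos β hβ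
    nlinarith [hpos α hα, hpos γ hγ, mul_le_mul_of_nonneg_right h1 (hpos γ hγ).le,
      mul_le_mul_of_nonneg_right h2 (hpos α hα).le]
  · intro r
    set g : V →ₗ[ℝ] ℝ := h - r • ht with hg
    have hgv : ∀ v, g v = h v - r * ht v := fun v => by
      simp [hg, LinearMap.sub_apply, LinearMap.smul_apply, smul_eq_mul]
    constructor
    · intro a ha x hx hx0 hmem
      have hga : g a = 0 := cone_zero g (fun v hv => by rw [hgv]; linarith [hv.2]) a ha
      have hgx : 0 < g x := by
        rcases clos_pos g (fun v hv => by rw [hgv]; linarith [hv.2]) x hx with rfl | h'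
        · exact absurd rfl hx0
        · exact h'
      have h2 : 0 ≤ (-g) (a + x) :=
        clos_nonneg (-g) (S := {β ∈ Φ | h β ≤ r * ht β})
          (fun v hv => by simp only [LinearMap.neg_apply, hgv]; linarith [hv.2]) _ hmem
      simp only [LinearMap.neg_apply, map_add, hga] at h2
      linarith
    · intro a ha x hx hx0 hmem
      have hga : g a = 0 := cone_zero g (fun v hv => by rw [hgv]; linarith [hv.2]) a ha
      have hgx : 0 < (-g) x := by
        rcases clos_pos (-g) (S := {β ∈ Φ | h β < r * ht β})
            (fun v hv => by simp only [LinearMap.neg_apply, hgv]; linarith [hv.2]) x hx with rfl | h'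
        · exact absurd rfl hx0
        · exact h'
      have h2 : 0 ≤ g (a + x) :=
        clos_nonneg g (fun v hv => by rw [hgv]; linarith [hv.2]) _ hmem
      simp only [LinearMap.neg_apply] at hgx
      rw [map_add, hga] at h2
      linarith
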